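/- (Lemma 3 of the paper.) For every integer r ≥ 1, set a = r and b = (2r)^r. Let Π = (X, Σ, Φ) be a 2CSP instance with |X| sufficiently large. Let u assign to each a-subset S of X a nonempty set u(S) of at most r partial assignments on S, and let v assign to each b-subset T a single partial satisfying assignment v(T) on T. Suppose that for all S ∈ C(X,a) and T ∈ C(X,b) with S ⊆ T, v(T)|_S ∈ u(S). Then Π has a globally satisfying assignment. -/

import Mathlib

/-- A 2CSP instance: variables `X`, value universe `V`, per-variable domains,
and binary constraints on pairs of distinct variables. -/
structure CSP (X V : Type) where
  dom : X → Set V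
  cons : Set ((X × X) × Set (V × V))
  distinct : ∀ c ∈ cons, c.1.1 ≠ c.1.2

/-- An assignment satisfies the instance. -/
def CSP.Satisfies {X V : Type} (P : CSP X V) (σ : X → V) : Prop :=
  (∀ x, σ x ∈ P.dom x) ∧ ∀ c ∈ P.cons, (σ c.1.1, σ c.1.2) ∈ c.2

/-- A partial assignment (represented as a total function whose values only
matter on `S`) satisfies all constraints induced within `S`. -/
def CSP.PartialSat {X V : Type} (P : CSP X V) (S : Finset X) (σ : X → V) : Prop :=
  (∀ x ∈ S, σ x ∈ P.dom x) ∧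
  ∀ c ∈ P.cons, c.1.1 ∈ S → c.1.2 ∈ S → (σ c.1.1, σ c.1.2) ∈ c.2

/-- Scale function: `sfun r n` is the "aliveness scale" used with `n` levels remaining. -/
def sfun (r : ℕ) : ℕ → ℕ
  | 0 => 0
  | n + 1 => r * sfun r n + 2

/-- `τ` is alive on `W` at scale `s`: every set `U` of size at most `s` can be
covered by a `b`-set `T ⊇ W ∪ U` whose assignment realizes `τ` on `W`. -/
def Alive {X V : Type} [DecidableEq X] (v : Finset X → X → V) (b : ℕ)
    (W : Finset X) (τ : X → V) (s : ℕ) : Prop :=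
  ∀ U : Finset X, U.card ≤ s →
    ∃ T : Finset X, T.card = b ∧ W ⊆ T ∧ U ⊆ T ∧ Set.EqOn (v T) τ ↑W

lemma alive_mono {X V : Type} [DecidableEq X] {v : Finset X → X → V} {b : ℕ}
    {W W' : Finset X} {τ : X → V} {s : ℕ}
    (hsub : W' ⊆ W) (h : Alive v b W τ s) : Alive v b W' τ s := by
  intro U hU
  obtain ⟨T, h1, h2, h3, h4⟩ := h U hU
  exact ⟨T, h1, hsub.trans h2, h3, h4.mono (by exact_mod_cast hsub)⟩

lemma alive_realize {X V : Type} [DecidableEq X] {v : Finset X → X → V} {b : ℕ}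
    {W : Finset X} {τ : X → V} {s : ℕ} (h : Alive v b W τ s) :
    ∃ T : Finset X, T.card = b ∧ W ⊆ T ∧ Set.EqOn (v T) τ ↑W := by
  obtain ⟨T, h1, h2, _, h4⟩ := h ∅ (by simp)
  exact ⟨T, h1, h2, h4⟩

/-- Distinguishing-set lemma: a list of functions pairwise distinct on `Y` admits a
subset `D ⊆ Y` of size `≤ length - 1` on which they are already pairwise distinct. -/
lemma distset {X V : Type} [DecidableEq X] (Y : Finset X) :
    ∀ L : List (X → V), L.Pairwise (fun f g => ¬Set.EqOn f g ↑Y) →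
      ∃ D : Finset X, D ⊆ Y ∧ D.card ≤ L.length - 1 ∧
        L.Pairwise (fun f g => ¬Set.EqOn f g ↑D) := by
  intro L
  induction L with
  | nil => exact fun _ => ⟨∅, Finset.empty_subset _, by simp, List.Pairwise.nil⟩
  | cons f L ih =>
    intro hpw
    rw [List.pairwise_cons] at hpw
    obtain ⟨hf, hLpw⟩ := hpw
    obtain ⟨D, hDY, hDcard, hDpw⟩ := ih hLpw
    by_cases hc : ∃ g ∈ L, Set.EqOn f g ↑D
    · obtain ⟨g, hgL, hfg⟩ := hc
      have hfgY : ¬Set.EqOn f g ↑Y := hf g hgL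
      have hx : ∃ x ∈ Y, f x ≠ g x := by
        by_contra h
        push_neg at h
        exact hfgY fun x hx => h x (by exact_mod_cast hx)
      obtain ⟨x, hxY, hxne⟩ := hx
      have hL1 : 1 ≤ L.length := List.length_pos_of_mem hgL
      refine ⟨insert x D, Finset.insert_subset hxY hDY, ?_, ?_⟩
      · have := Finset.card_insert_le x D
        simp only [List.length_cons]
        omega
      · rw [List.pairwise_cons]
        constructor
        · intro h hhL heq
          have hsym : Symmetric (fun a b : X → V => ¬Set.EqOn a b (↑D : Set X)) :=
            fun a b hab he => hab he.symm
          have hDsub : (↑D : Set X) ⊆ ↑(insert x D) := by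
            exact_mod_cast Finset.subset_insert x D
          by_cases hhg : h = g
          · subst hhg
            exact hxne (heq (by exact_mod_cast Finset.mem_insert_self x D))
          · have h1 : Set.EqOn f h ↑D := heq.mono hDsub
            have h2 : Set.EqOn g h ↑D := hfg.symm.trans h1
            haveI : Std.Symm (fun a b : X → V => ¬Set.EqOn a b (↑D : Set X)) := ⟨fun _ _ h => hsym h⟩
            exact hDpw.forall hgL hhL (fun hgh => hhg hgh.symm) h2
        · exact hDpw.imp (fun {a b} hnab heq =>
            hnab (heq.mono (by exact_mod_cast Finset.subset_insert x D)))
    · push_neg at hc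
      refine ⟨D, hDY, by simp only [List.length_cons]; omega, ?_⟩
      rw [List.pairwise_cons]
      exact ⟨hc, hDpw⟩

/-- The key counting bound: there cannot exist `r+1` pairwise-distinct-on-`Y`
functions all realized (on `Y`) by `b`-sets, when `r ≤ |Y|`. -/
lemma fbound {X V : Type} [Fintype X] [DecidableEq X]
    (r b : ℕ) (u : Finset X → Set (X → V)) (v : Finset X → X → V)
    (hu : ∀ S : Finset X, S.card = r → (u S).Finite ∧ (u S).Nonempty ∧ (u S).ncard ≤ r)
    (hcons : ∀ S T : Finset X, S.card = r → T.card = b → S ⊆ T →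
      ∃ σ ∈ u S, ∀ x ∈ S, v T x = σ x)
    (Y : Finset X) (hrY : r ≤ Y.card) (L : List (X → V)) (hlen : L.length = r + 1)
    (hpw : L.Pairwise (fun f g => ¬Set.EqOn f g ↑Y))
    (hreal : ∀ f ∈ L, ∃ T : Finset X, T.card = b ∧ Y ⊆ T ∧ Set.EqOn (v T) f ↑Y) :
    False := by
  classical
  obtain ⟨D, hDY, hDc, hDpw⟩ := distset Y L hpw
  have hDc' : D.card ≤ r := by omega
  obtain ⟨S, hDS, hSY, hScard⟩ :=
    Finset.exists_subsuperset_card_eq hDY hDc' hrY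
  have hScard' : S.card = r := by omega
  have hufin := (hu S hScard').1
  have huncard := (hu S hScard').2.2
  have hφex : ∀ f ∈ L, ∃ g, g ∈ u S ∧ ∀ x ∈ S, g x = f x := by
    intro f hf
    obtain ⟨T, hTb, hYT, heq⟩ := hreal f hf
    obtain ⟨g, hg, hgs⟩ := hcons S T hScard' hTb (hSY.trans hYT)
    exact ⟨g, hg, fun x hx => by
      rw [← hgs x hx]; exact heq (by exact_mod_cast hSY hx)⟩
  set φ : (X → V) → (X → V) := fun f =>
    if h : ∃ g, g ∈ u S ∧ ∀ x ∈ S, g x = f x then h.choose else f with hφdef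
  have hφ : ∀ f ∈ L, φ f ∈ u S ∧ ∀ x ∈ S, φ f x = f x := by
    intro f hf
    have hex := hφex f hf
    have heq : φ f = hex.choose := by simp only [hφdef, dif_pos hex]
    rw [heq]
    exact hex.choose_spec
  have hmapnd : (L.map φ).Nodup := by
    have : (L.map φ).Pairwise (· ≠ ·) := by
      rw [List.pairwise_map]
      refine List.Pairwise.imp_of_mem ?_ hDpw
      intro a b ha hb hnab heq
      apply hnab
      intro x hx
      have hxD : x ∈ D := by exact_mod_cast hx
      have hxS : x ∈ S := hDS hxD
      calc a x = φ a x := ((hφ a ha).2 x hxS).symm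
        _ = φ b x := by rw [heq]
        _ = b x := (hφ b hb).2 x hxS
    exact this
  have hcard : (L.map φ).toFinset.card = r + 1 := by
    rw [List.toFinset_card_of_nodup hmapnd, List.length_map, hlen]
  have hsubu : (L.map φ).toFinset ⊆ hufin.toFinset := by
    intro g hg
    rw [List.mem_toFinset, List.mem_map] at hg
    obtain ⟨f, hf, rfl⟩ := hg
    rw [Set.Finite.mem_toFinset]
    exact (hφ f hf).1
  have hle := Finset.card_le_card hsubu
  have hn : (u S).ncard = hufin.toFinset.card := Set.ncard_eq_toFinset_card _ _
  omega

/-- Alive-extension lemma: an alive assignment on `Y` admits an alive extension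
to any superset `W`, at a reduced scale. -/
lemma aext {X V : Type} [Fintype X] [DecidableEq X]
    (r b : ℕ) (u : Finset X → Set (X → V)) (v : Finset X → X → V)
    (hu : ∀ S : Finset X, S.card = r → (u S).Finite ∧ (u S).Nonempty ∧ (u S).ncard ≤ r)
    (hcons : ∀ S T : Finset X, S.card = r → T.card = b → S ⊆ T →
      ∃ σ ∈ u S, ∀ x ∈ S, v T x = σ x)
    (Y W : Finset X) (hYW : Y ⊆ W) (hrW : r ≤ W.card) (ρ : X → V) (s s₂ : ℕ)
    (hal : Alive v b Y ρ s) (hs : (W \ Y).card + r * s₂ ≤ s) :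
    ∃ τ : X → V, Set.EqOn τ ρ ↑Y ∧ Alive v b W τ s₂ := by
  classical
  by_contra hno
  push_neg at hno
  have grow : ∀ j, j ≤ r + 1 → ∃ (L : List (X → V)) (Ws : Finset X),
      L.length = j ∧ Ws.card ≤ j * s₂ ∧
      L.Pairwise (fun f g => ¬Set.EqOn f g ↑W) ∧
      (∀ f ∈ L, ∃ T : Finset X, T.card = b ∧ W ⊆ T ∧ Set.EqOn (v T) f ↑W) ∧
      (∀ f ∈ L, ∀ T : Finset X, T.card = b → W ⊆ T → Ws ⊆ T →
        ¬Set.EqOn (v T) f ↑W) := by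
    intro j
    induction j with
    | zero => exact fun _ => ⟨[], ∅, rfl, by simp, List.Pairwise.nil, by simp, by simp⟩
    | succ j ih =>
      intro hj
      obtain ⟨L, Ws, hlen, hWsc, hpw, hreal, hblock⟩ := ih (by omega)
      have hjr : j ≤ r := by omega
      have hUcard : ((W \ Y) ∪ Ws).card ≤ s := by
        have h1 := Finset.card_union_le (W \ Y) Ws
        have h2 : j * s₂ ≤ r * s₂ := Nat.mul_le_mul_right _ hjr
        omega
      obtain ⟨T, hTb, hYT, hUT, hTeq⟩ := hal _ hUcard
      have hWT : W ⊆ T := by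
        intro x hx
        by_cases hxY : x ∈ Y
        · exact hYT hxY
        · exact hUT (Finset.mem_union_left _ (Finset.mem_sdiff.mpr ⟨hx, hxY⟩))
      have hWsT : Ws ⊆ T := fun x hx => hUT (Finset.mem_union_right _ hx)
      have hfρ : Set.EqOn (v T) ρ ↑Y := hTeq
      have hnal := hno (v T) hfρ
      simp only [Alive] at hnal
      push_neg at hnal
      obtain ⟨U', hU'c, hU'⟩ := hnal
      refine ⟨v T :: L, Ws ∪ U', by simp [hlen], ?_, ?_, ?_, ?_⟩
      · have h1 := Finset.card_union_le Ws U'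
        have : (j + 1) * s₂ = j * s₂ + s₂ := by ring
        omega
      · rw [List.pairwise_cons]
        refine ⟨?_, hpw⟩
        intro g hg heq
        exact hblock g hg T hTb hWT hWsT heq
      · intro f hf
        rcases List.mem_cons.mp hf with rfl | hf
        · exact ⟨T, hTb, hWT, Set.eqOn_refl _ _⟩
        · exact hreal f hf
      · intro f hf T' hT'b hWT' hWsU'
        rcases List.mem_cons.mp hf with rfl | hf
        · exact hU' T' hT'b hWT'
            (fun x hx => hWsU' (Finset.mem_union_right _ hx))
        · exact hblock f hf T' hT'b hWT'
            (fun x hx => hWsU' (Finset.mem_union_left _ hx))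
  obtain ⟨L, Ws, hlen, _, hpw, hreal, _⟩ := grow (r + 1) le_rfl
  exact fbound r b u v hu hcons W hrW L hlen hpw hreal

/-- Main descending induction: with `n` levels remaining (scale `sfun r n`),
a family of `r+1-n` pairwise-distinct alive assignments on a set of size
`2r - n` yields a global satisfying assignment. -/
lemma mainlem {X V : Type} [Fintype X] [DecidableEq X]
    (P : CSP X V) (r b : ℕ) (u : Finset X → Set (X → V)) (v : Finset X → X → V)
    (hu : ∀ S : Finset X, S.card = r → (u S).Finite ∧ (u S).Nonempty ∧ (u S).ncard ≤ r)
    (hcons : ∀ S T : Finset X, S.card = r → T.card = b → S ⊆ T →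
      ∃ σ ∈ u S, ∀ x ∈ S, v T x = σ x)
    (hv : ∀ T : Finset X, T.card = b → P.PartialSat T (v T)) :
    ∀ n, n ≤ r → ∀ Y : Finset X, Y.card = 2 * r - n →
      ∀ L : List (X → V), L.length = r + 1 - n →
        L.Pairwise (fun f g => ¬Set.EqOn f g ↑Y) →
        (∀ f ∈ L, Alive v b Y f (sfun r n)) →
        ∃ σ : X → V, P.Satisfies σ := by
  classical
  intro n
  induction n with
  | zero =>
    intro _ Y hY L hL hpw hal
    exact (fbound r b u v hu hcons Y (by omega) L (by omega) hpw
      (fun f hf => alive_realize (hal f hf))).elim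
  | succ n ih =>
    intro hn Y hY L hL hpw hal
    have hrn : n + 1 ≤ r := hn
    have hYcard : Y.card = 2 * r - (n + 1) := hY
    have hrY : r ≤ Y.card := by omega
    by_cases hsplit : ∃ ρ ∈ L, ∃ W : Finset X, Y ⊆ W ∧ W.card ≤ Y.card + 2 ∧
        ∃ τ₁ τ₂ : X → V, Set.EqOn τ₁ ρ ↑Y ∧ Set.EqOn τ₂ ρ ↑Y ∧
          Alive v b W τ₁ (sfun r n) ∧ Alive v b W τ₂ (sfun r n) ∧
          ¬Set.EqOn τ₁ τ₂ ↑W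
    · -- split case: grow `Y` by a distinguishing point and apply the IH
      obtain ⟨ρ, hρL, W, hYW, hWc, τ₁, τ₂, h1ρ, h2ρ, hal1, hal2, hne⟩ := hsplit
      have hz : ∃ z ∈ W, τ₁ z ≠ τ₂ z := by
        by_contra h
        push_neg at h
        exact hne fun x hx => h x (by exact_mod_cast hx)
      obtain ⟨z, hzW, hzne⟩ := hz
      have hzY : z ∉ Y := fun hzY =>
        hzne (by rw [h1ρ (by exact_mod_cast hzY), h2ρ (by exact_mod_cast hzY)])
      set Y' := insert z Y with hY'def
      have hY'c : Y'.card = 2 * r - n := by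
        rw [hY'def, Finset.card_insert_of_notMem hzY]; omega
      have hY'W : Y' ⊆ W := Finset.insert_subset hzW hYW
      have hYY' : Y ⊆ Y' := Finset.subset_insert _ _
      have hrY' : r ≤ Y'.card := by omega
      have hd1 : (Y' \ Y).card ≤ 1 := by
        have : Y' \ Y ⊆ {z} := by
          intro w hw
          rw [Finset.mem_sdiff, hY'def, Finset.mem_insert] at hw
          rcases hw.1 with rfl | hwY
          · exact Finset.mem_singleton_self _
          · exact absurd hwY hw.2
        calc (Y' \ Y).card ≤ ({z} : Finset X).card := Finset.card_le_card this
          _ = 1 := Finset.card_singleton _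
      have hext : ∀ f ∈ L, ∃ τ, Set.EqOn τ f ↑Y ∧ Alive v b Y' τ (sfun r n) := by
        intro f hf
        apply aext r b u v hu hcons Y Y' hYY' hrY' f (sfun r (n + 1)) (sfun r n)
          (hal f hf)
        show (Y' \ Y).card + r * sfun r n ≤ r * sfun r n + 2
        omega
      set φ : (X → V) → (X → V) := fun f =>
        if h : ∃ τ, Set.EqOn τ f ↑Y ∧ Alive v b Y' τ (sfun r n) then h.choose else f
        with hφdef
      have hφ : ∀ f ∈ L, Set.EqOn (φ f) f ↑Y ∧ Alive v b Y' (φ f) (sfun r n) := by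
        intro f hf
        have hex := hext f hf
        have heq : φ f = hex.choose := by simp only [hφdef, dif_pos hex]
        rw [heq]
        exact hex.choose_spec
      have hnd : L.Nodup := hpw.imp (fun {a b} hnab he =>
        hnab (by rw [he]; exact Set.eqOn_refl _ _))
      have hsym : Symmetric (fun f g : X → V => ¬Set.EqOn f g (↑Y : Set X)) :=
        fun a b h he => h he.symm
      have hρg : ∀ g ∈ L.erase ρ, ¬Set.EqOn ρ g ↑Y := by
        intro g hg
        have hgL : g ∈ L := List.mem_of_mem_erase hg
        have hgρ : g ≠ ρ := ((List.Nodup.mem_erase_iff hnd).mp hg).1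
        haveI : Std.Symm (fun f g : X → V => ¬Set.EqOn f g (↑Y : Set X)) := ⟨fun _ _ h => hsym h⟩
        exact hpw.forall hρL hgL (Ne.symm hgρ)
      have hYsub : (↑Y : Set X) ⊆ ↑Y' := by exact_mod_cast hYY'
      set L' : List (X → V) := τ₁ :: τ₂ :: (L.erase ρ).map φ with hL'def
      have hlen' : L'.length = r + 1 - n := by
        rw [hL'def]
        simp only [List.length_cons, List.length_map,
          List.length_erase_of_mem hρL, hL]
        omega
      have hpwD : (L.erase ρ).Pairwise (fun f g => ¬Set.EqOn f g ↑Y) :=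
        hpw.sublist List.erase_sublist
      have hzY' : z ∈ (↑Y' : Set X) := by
        exact_mod_cast Finset.mem_insert_self z Y
      have hmapdist : ∀ t : X → V, Set.EqOn t ρ ↑Y →
          ∀ g ∈ (L.erase ρ).map φ, ¬Set.EqOn t g ↑Y' := by
        intro t htρ g hg he
        obtain ⟨f, hfE, rfl⟩ := List.mem_map.mp hg
        have hfL := List.mem_of_mem_erase hfE
        apply hρg f hfE
        intro x hx
        have hx' : x ∈ (↑Y' : Set X) := hYsub hx
        calc ρ x = t x := (htρ hx).symm
          _ = φ f x := he hx'
          _ = f x := (hφ f hfL).1 hx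
      have hpw' : L'.Pairwise (fun f g => ¬Set.EqOn f g ↑Y') := by
        rw [hL'def, List.pairwise_cons, List.pairwise_cons]
        refine ⟨?_, ?_, ?_⟩
        · intro g hg
          rcases List.mem_cons.mp hg with rfl | hg
          · exact fun he => hzne (he hzY')
          · exact hmapdist τ₁ h1ρ g hg
        · exact hmapdist τ₂ h2ρ
        · rw [List.pairwise_map]
          refine List.Pairwise.imp_of_mem ?_ hpwD
          intro a c ha hc hnac he
          apply hnac
          intro x hx
          have hx' : x ∈ (↑Y' : Set X) := hYsub hx
          calc a x = φ a x := ((hφ a (List.mem_of_mem_erase ha)).1 hx).symm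
            _ = φ c x := he hx'
            _ = c x := (hφ c (List.mem_of_mem_erase hc)).1 hx
      have hal' : ∀ f ∈ L', Alive v b Y' f (sfun r n) := by
        intro f hf
        rw [hL'def] at hf
        rcases List.mem_cons.mp hf with rfl | hf
        · exact alive_mono hY'W hal1
        rcases List.mem_cons.mp hf with rfl | hf
        · exact alive_mono hY'W hal2
        obtain ⟨g, hgE, rfl⟩ := List.mem_map.mp hf
        exact (hφ g (List.mem_of_mem_erase hgE)).2
      exact ih (by omega) Y' hY'c L' hlen' hpw' hal'
    · -- no-split case: build the global assignment
      push_neg at hsplit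
      have hL0 : 0 < L.length := by omega
      obtain ⟨ρ, hρL⟩ := List.exists_mem_of_length_pos hL0
      have halρ := hal ρ hρL
      have hAx : ∀ x : X, ∃ τ, Set.EqOn τ ρ ↑Y ∧
          Alive v b (insert x Y) τ (sfun r n) := by
        intro x
        apply aext r b u v hu hcons Y (insert x Y) (Finset.subset_insert _ _)
          (le_trans hrY (Finset.card_le_card (Finset.subset_insert _ _))) ρ
          (sfun r (n + 1)) (sfun r n) halρ
        have hd1 : (insert x Y \ Y).card ≤ 1 := by
          have : insert x Y \ Y ⊆ {x} := by
            intro w hw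
            rw [Finset.mem_sdiff, Finset.mem_insert] at hw
            rcases hw.1 with rfl | hwY
            · exact Finset.mem_singleton_self _
            · exact absurd hwY hw.2
          calc (insert x Y \ Y).card ≤ ({x} : Finset X).card :=
              Finset.card_le_card this
            _ = 1 := Finset.card_singleton _
        show (insert x Y \ Y).card + r * sfun r n ≤ r * sfun r n + 2
        omega
      set F : X → (X → V) := fun x => (hAx x).choose with hFdef
      have hFs : ∀ x, Set.EqOn (F x) ρ ↑Y ∧
          Alive v b (insert x Y) (F x) (sfun r n) := fun x => (hAx x).choose_spec
      refine ⟨fun x => F x x, ?_, ?_⟩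
      · intro x
        obtain ⟨T, hTb, hWT, hTeq⟩ := alive_realize (hFs x).2
        have hvx : v T x = F x x :=
          hTeq (by exact_mod_cast Finset.mem_insert_self x Y)
        show F x x ∈ P.dom x
        rw [← hvx]
        exact (hv T hTb).1 x (hWT (Finset.mem_insert_self _ _))
      · intro c hc
        have hxy : c.1.1 ≠ c.1.2 := P.distinct c hc
        set x := c.1.1 with hxdef
        set y := c.1.2 with hydef
        set W := insert x (insert y Y) with hWdef
        have hYW : Y ⊆ W :=
          (Finset.subset_insert y Y).trans (Finset.subset_insert x _)
        have hWc : W.card ≤ Y.card + 2 := by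
          have h1 : W.card ≤ (insert y Y).card + 1 := Finset.card_insert_le _ _
          have h2 := Finset.card_insert_le y Y
          omega
        have hdW : (W \ Y).card ≤ 2 := by
          have hsub : W \ Y ⊆ {x, y} := by
            intro w hw
            rw [Finset.mem_sdiff, hWdef, Finset.mem_insert, Finset.mem_insert] at hw
            rcases hw.1 with rfl | (rfl | hwY)
            · exact Finset.mem_insert_self _ _
            · exact Finset.mem_insert_of_mem (Finset.mem_singleton_self _)
            · exact absurd hwY hw.2
          calc (W \ Y).card ≤ ({x, y} : Finset X).card := Finset.card_le_card hsub
            _ ≤ 2 := Finset.card_insert_le _ _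
        obtain ⟨τ', hτρ, hτal⟩ := aext r b u v hu hcons Y W hYW
          (le_trans hrY (Finset.card_le_card hYW)) ρ (sfun r (n + 1)) (sfun r n)
          halρ (by show (W \ Y).card + r * sfun r n ≤ r * sfun r n + 2; omega)
        obtain ⟨T, hTb, hWT, hTeq⟩ := alive_realize hτal
        have hxW : x ∈ W := Finset.mem_insert_self _ _
        have hyW : y ∈ W := Finset.mem_insert_of_mem (Finset.mem_insert_self _ _)
        have hxsub : insert x Y ⊆ W := by
          rw [hWdef]
          exact Finset.insert_subset_insert x (Finset.subset_insert y Y)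
        have hysub : insert y Y ⊆ W := Finset.subset_insert x _
        have hagx : Set.EqOn τ' (F x) ↑(insert x Y) :=
          hsplit ρ hρL (insert x Y) (Finset.subset_insert _ _)
            (by have := Finset.card_insert_le x Y; omega) τ' (F x) hτρ (hFs x).1
            (alive_mono hxsub hτal) (hFs x).2
        have hagy : Set.EqOn τ' (F y) ↑(insert y Y) :=
          hsplit ρ hρL (insert y Y) (Finset.subset_insert _ _)
            (by have := Finset.card_insert_le y Y; omega) τ' (F y) hτρ (hFs y).1
            (alive_mono hysub hτal) (hFs y).2
        have hvx : v T x = F x x := by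
          have h1 : v T x = τ' x := hTeq (by exact_mod_cast hxW)
          have h2 : τ' x = F x x :=
            hagx (by exact_mod_cast Finset.mem_insert_self x Y)
          rw [h1, h2]
        have hvy : v T y = F y y := by
          have h1 : v T y = τ' y := hTeq (by exact_mod_cast hyW)
          have h2 : τ' y = F y y :=
            hagy (by exact_mod_cast Finset.mem_insert_self y Y)
          rw [h1, h2]
        have hcc := (hv T hTb).2 c hc (hWT hxW) (hWT hyW)
        show ((fun x => F x x) c.1.1, (fun x => F x x) c.1.2) ∈ c.2
        show (F x x, F y y) ∈ c.2
        rw [← hvx, ← hvy]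
        exact hcc

lemma key_ineq (r : ℕ) (hr2 : 2 ≤ r) : r + r * sfun r r ≤ (2 * r) ^ r := by
  have helper : ∀ k, 2 ≤ k → r * sfun r k + r ≤ (2 * r) ^ k := by
    intro k hk
    induction k, hk using Nat.le_induction with
    | base =>
      have hs : sfun r 2 = r * 2 + 2 := by simp [sfun]
      rw [hs]
      have : (2 * r) ^ 2 = 4 * (r * r) := by ring
      rw [this]
      nlinarith [hr2]
    | succ k hk ih =>
      have h2r : 2 * r ≤ (2 * r) ^ k := Nat.le_self_pow (by omega) _
      have h4 : 4 ≤ (2 * r) ^ k := by omega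
      have hmul : r * (r * sfun r k + r) ≤ r * (2 * r) ^ k :=
        Nat.mul_le_mul_left r ih
      have hs : sfun r (k + 1) = r * sfun r k + 2 := rfl
      rw [hs, pow_succ]
      nlinarith [hmul, h4, hr2]
  have h := helper r hr2
  linarith

/-- Lemma 3: with `a = r`, `b = (2r)^r`, if an `r`-sized
multi-assignment `u` on `a`-subsets and a 1-sized assignment `v` on `b`-subsets
(each `v T` a partial satisfying assignment) satisfy `v(T)|_S ∈ u(S)` for all
`S ⊆ T`, then `Π` has a globally satisfying assignment. -/
theorem lemma3 {X V : Type} [Fintype X] [DecidableEq X]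
    (P : CSP X V) (r : ℕ) (hr : 1 ≤ r)
    (a b : ℕ) (hadef : a = r) (hbdef : b = (2 * r) ^ r)
    (hX : 2 * b ≤ Fintype.card X)
    (u : Finset X → Set (X → V))
    (hu : ∀ S : Finset X, S.card = a →
      (u S).Finite ∧ (u S).Nonempty ∧ (u S).ncard ≤ r)
    (v : Finset X → (X → V))
    (hv : ∀ T : Finset X, T.card = b → P.PartialSat T (v T))
    (hcons : ∀ S T : Finset X, S.card = a → T.card = b → S ⊆ T →
      ∃ σ ∈ u S, ∀ x ∈ S, v T x = σ x) :
    ∃ σ : X → V, P.Satisfies σ := by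
  classical
  subst a
  by_cases hr1 : r = 1
  · -- special case r = 1 : each u {x} is a singleton, pairs are b-sets
    subst hr1
    have hb2 : b = 2 := by rw [hbdef]; norm_num
    subst hb2
    have hX4 : 4 ≤ Fintype.card X := by
      have : (2 * 1 : ℕ) ^ 1 = 2 := by norm_num
      omega
    have hsing : ∀ x : X, ({x} : Finset X).card = 1 := fun x => Finset.card_singleton x
    set g : X → (X → V) := fun x => (hu {x} (hsing x)).2.1.choose with hgdef
    have hgmem : ∀ x, g x ∈ u {x} := fun x => (hu {x} (hsing x)).2.1.choose_spec
    have huniq : ∀ x (p q : X → V), p ∈ u {x} → q ∈ u {x} → p = q := by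
      intro x p q hp hq
      exact (Set.ncard_le_one_iff (hu {x} (hsing x)).1).mp (hu {x} (hsing x)).2.2 hp hq
    have hval : ∀ T : Finset X, T.card = 2 → ∀ x ∈ T, v T x = g x x := by
      intro T hT x hx
      obtain ⟨τ, hτ, hτx⟩ := hcons {x} T (hsing x) hT (Finset.singleton_subset_iff.mpr hx)
      have : τ = g x := huniq x τ (g x) hτ (hgmem x)
      rw [← this]
      exact hτx x (Finset.mem_singleton_self x)
    have hpaircard : ∀ x y : X, x ≠ y → ({x, y} : Finset X).card = 2 := by
      intro x y hxy
      rw [Finset.card_insert_of_notMem (by simp [hxy]), Finset.card_singleton]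
    refine ⟨fun x => g x x, ?_, ?_⟩
    · intro x
      have : Nontrivial X := Fintype.one_lt_card_iff_nontrivial.mp (by omega)
      obtain ⟨y, hy⟩ := exists_ne x
      have hT : ({x, y} : Finset X).card = 2 := hpaircard x y (Ne.symm hy)
      have h1 := (hv {x, y} hT).1 x (Finset.mem_insert_self _ _)
      rw [hval {x, y} hT x (Finset.mem_insert_self _ _)] at h1
      exact h1
    · intro c hc
      have hxy : c.1.1 ≠ c.1.2 := P.distinct c hc
      have hT : ({c.1.1, c.1.2} : Finset X).card = 2 := hpaircard _ _ hxy
      have hm1 : c.1.1 ∈ ({c.1.1, c.1.2} : Finset X) := Finset.mem_insert_self _ _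
      have hm2 : c.1.2 ∈ ({c.1.1, c.1.2} : Finset X) :=
        Finset.mem_insert_of_mem (Finset.mem_singleton_self _)
      have h1 := (hv {c.1.1, c.1.2} hT).2 c hc hm1 hm2
      rw [hval _ hT c.1.1 hm1, hval _ hT c.1.2 hm2] at h1
      exact h1
  · -- main case r ≥ 2
    subst hbdef
    have hr2 : 2 ≤ r := by omega
    have hkey : r + r * sfun r r ≤ (2 * r) ^ r := key_ineq r hr2
    have hbX : (2 * r) ^ r ≤ Fintype.card X := by omega
    have h2r : 2 * r ≤ (2 * r) ^ r := Nat.le_self_pow (by omega) _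
    have hrX : r ≤ Fintype.card X := by omega
    obtain ⟨S₀, _, hS₀card⟩ := Finset.exists_subset_card_eq (s := (Finset.univ : Finset X)) (n := r)
      (by simpa using hrX)
    have hg₀ : (u S₀).Nonempty := (hu S₀ hS₀card).2.1
    set g₀ : X → V := hg₀.choose with hg₀def
    have halive0 : Alive v ((2 * r) ^ r) ∅ g₀ (r + r * sfun r r) := by
      intro U hU
      obtain ⟨T, hUT, hTcard⟩ :=
        Finset.exists_superset_card_eq (le_trans hU hkey) hbX
      refine ⟨T, hTcard, Finset.empty_subset _, hUT, ?_⟩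
      rw [Finset.coe_empty]
      exact fun x hx => hx.elim
    obtain ⟨ρ₀, _, hρal⟩ := aext r ((2 * r) ^ r) u v hu hcons ∅ S₀
      (Finset.empty_subset _) (le_of_eq hS₀card.symm) g₀ (r + r * sfun r r)
      (sfun r r) halive0 (by rw [Finset.sdiff_empty, hS₀card])
    refine mainlem P r ((2 * r) ^ r) u v hu hcons hv r le_rfl S₀ (by omega) [ρ₀]
      (by simp only [List.length_singleton]; omega) (List.pairwise_singleton _ _) ?_
    intro f hf
    rw [List.mem_singleton] at hf
    subst hf
    exact hρal
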